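/- Let p₁,…,p_t be distinct primes each at least 5, and set h = (1/2)·gcd(p₁−1,…,p_t−1,24). Then h is a positive integer, and for an integer k, there exist integers v and (r_δ) for each divisor δ ≠ 1 of N = p₁⋯p_t satisfying 2k = 24v − ∑_{δ|N, δ≠1}(δ−1)·r_δ if and only if h divides k. -/

import Mathlib

lemma bezout_finset (S : Finset ℕ) (f : ℕ → ℕ) :
    ∃ c : ℕ → ℤ, ((S.gcd f : ℕ) : ℤ) = ∑ p ∈ S, (f p : ℤ) * c p := by
  classical
  induction S using Finset.induction with
  | empty => exact ⟨fun _ => 0, by simp⟩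
  | insert _ _ hp =>
    rename_i p T IH
    obtain ⟨c, hc⟩ := IH
    set G := T.gcd f with hG
    refine ⟨fun q => if q = p then (f p).gcdA G else (f p).gcdB G * c q, ?_⟩
    have hgi : ((insert p T).gcd f : ℕ) = Nat.gcd (f p) G := by
      rw [Finset.gcd_insert]; rfl
    rw [hgi, Finset.sum_insert hp]
    simp only [if_pos rfl]
    have hrest : ∑ q ∈ T, (f q : ℤ) * (if q = p then (f p).gcdA G else (f p).gcdB G * c q)
        = (f p).gcdB G * ∑ q ∈ T, (f q : ℤ) * c q := by
      rw [Finset.mul_sum]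
      refine Finset.sum_congr rfl fun q hq => ?_
      rw [if_neg (by rintro rfl; exact hp hq)]
      ring
    rw [hrest, ← hc, Nat.gcd_eq_gcd_ab]
    simp
    ring

lemma divisor_one (d : ℕ) (S : Finset ℕ) (hpr : ∀ p ∈ S, Nat.Prime p)
    (h1 : ∀ p ∈ S, (p : ZMod d) = 1) :
    ∀ δ : ℕ, δ ∣ ∏ p ∈ S, p → (δ : ZMod d) = 1 := by
  classical
  induction S using Finset.induction with
  | empty =>
    intro δ hδ
    simp only [Finset.prod_empty, Nat.dvd_one] at hδ
    simp [hδ]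
  | insert _ _ hp =>
    rename_i p T IH
    intro δ hδ
    rw [Finset.prod_insert hp] at hδ
    obtain ⟨a, b, ha, hb, rfl⟩ := exists_dvd_and_dvd_of_dvd_mul hδ
    have hpr' : Nat.Prime p := hpr p (Finset.mem_insert_self p T)
    have ha1 : (a : ZMod d) = 1 := by
      rcases (Nat.Prime.eq_one_or_self_of_dvd hpr' a ha) with h | h
      · simp [h]
      · rw [h]; exact h1 p (Finset.mem_insert_self p T)
    have hb1 : (b : ZMod d) = 1 :=
      IH (fun q hq => hpr q (Finset.mem_insert_of_mem hq))
        (fun q hq => h1 q (Finset.mem_insert_of_mem hq)) b hb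
    push_cast
    rw [ha1, hb1, one_mul]

theorem stmt_5 (S : Finset ℕ) (hS : ∀ p ∈ S, Nat.Prime p ∧ 5 ≤ p)
    (N : ℕ) (hN : N = ∏ p ∈ S, p) (h : ℕ)
    (hh : h = Nat.gcd (S.gcd (fun p => p - 1)) 24 / 2) (k : ℤ) :
    0 < h ∧
      ((∃ v : ℤ, ∃ r : ℕ → ℤ,
          2 * k = 24 * v - ∑ δ ∈ N.divisors.erase 1, ((δ : ℤ) - 1) * r δ) ↔
        (h : ℤ) ∣ k) := by
  classical
  set gS : ℕ := S.gcd (fun p => p - 1) with hgS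
  set d : ℕ := Nat.gcd gS 24 with hd
  -- 2 divides gS
  have h2gS : 2 ∣ gS := by
    refine Finset.dvd_gcd fun p hp => ?_
    obtain ⟨hpr, hp5⟩ := hS p hp
    have hodd : Odd p := hpr.odd_of_ne_two (by omega)
    obtain ⟨m, hm⟩ := hodd
    simp only [hm]
    omega
  have h2d : 2 ∣ d := Nat.dvd_gcd h2gS (by norm_num)
  have hdpos : 0 < d := Nat.gcd_pos_of_pos_right _ (by norm_num)
  have hd2h : d = 2 * h := by omega
  have hdgS : d ∣ gS := Nat.gcd_dvd_left _ _
  have hd24 : d ∣ 24 := Nat.gcd_dvd_right _ _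
  -- each prime is 1 mod d
  have hp1 : ∀ p ∈ S, (p : ZMod d) = 1 := by
    intro p hp
    have hdp : d ∣ p - 1 := hdgS.trans (Finset.gcd_dvd hp)
    have hp5 : 5 ≤ p := (hS p hp).2
    have : ((p - 1 : ℕ) : ZMod d) = 0 := (ZMod.natCast_eq_zero_iff _ _).2 hdp
    have hcast : ((p - 1 : ℕ) : ZMod d) = (p : ZMod d) - 1 := by
      push_cast [Nat.cast_sub (by omega : 1 ≤ p)]
      ring
    rw [hcast] at this
    linear_combination this
  have hNne : N ≠ 0 := by
    rw [hN]
    exact Finset.prod_ne_zero_iff.2 fun p hp => (hS p hp).1.pos.ne'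
  -- d divides δ - 1 for divisors δ ≠ 1
  have hδdvd : ∀ δ ∈ N.divisors.erase 1, (d : ℤ) ∣ (δ : ℤ) - 1 := by
    intro δ hδ
    rw [Finset.mem_erase, Nat.mem_divisors] at hδ
    have h1 : (δ : ZMod d) = 1 :=
      divisor_one d S (fun p hp => (hS p hp).1) hp1 δ (hN ▸ hδ.2.1)
    rw [← ZMod.intCast_zmod_eq_zero_iff_dvd]
    push_cast
    rw [h1]
    ring
  refine ⟨by omega, ?_, ?_⟩
  · rintro ⟨v, r, he⟩
    have hd2k : (d : ℤ) ∣ 2 * k := by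
      rw [he]
      refine dvd_sub (Dvd.dvd.mul_right ?_ v) (Finset.dvd_sum fun δ hδ => (hδdvd δ hδ).mul_right _)
      exact_mod_cast Int.natCast_dvd_natCast.2 hd24
    rw [hd2h] at hd2k
    push_cast at hd2k
    exact (mul_dvd_mul_iff_left (by norm_num : (2:ℤ) ≠ 0)).1 hd2k
  · rintro ⟨m, hm⟩
    obtain ⟨c, hc⟩ := bezout_finset S (fun p => p - 1)
    set A := gS.gcdA 24 with hA
    set B := gS.gcdB 24 with hB
    have hbez : (d : ℤ) = gS * A + 24 * B := Nat.gcd_eq_gcd_ab gS 24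
    refine ⟨B * m, fun δ => if δ ∈ S then -(c δ * (A * m)) else 0, ?_⟩
    have hsub : S ⊆ N.divisors.erase 1 := by
      intro p hp
      rw [Finset.mem_erase, Nat.mem_divisors]
      exact ⟨(hS p hp).1.ne_one, hN ▸ Finset.dvd_prod_of_mem _ hp, hNne⟩
    have hsum : ∑ δ ∈ N.divisors.erase 1, ((δ : ℤ) - 1) * (if δ ∈ S then -(c δ * (A * m)) else 0)
        = ∑ p ∈ S, ((p : ℤ) - 1) * (-(c p * (A * m))) := by
      rw [← Finset.sum_subset hsub (fun δ _ hδ => by rw [if_neg hδ, mul_zero])]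
      exact Finset.sum_congr rfl fun p hp => by rw [if_pos hp]
    rw [hsum]
    have hcast : ∀ p ∈ S, ((p : ℤ) - 1) = ((p - 1 : ℕ) : ℤ) := by
      intro p hp
      have : 5 ≤ p := (hS p hp).2
      push_cast [Nat.cast_sub (by omega : 1 ≤ p)]
      ring
    have hsum2 : ∑ p ∈ S, ((p : ℤ) - 1) * (-(c p * (A * m)))
        = -(A * m) * ∑ p ∈ S, ((p - 1 : ℕ) : ℤ) * c p := by
      rw [Finset.mul_sum]
      exact Finset.sum_congr rfl fun p hp => by rw [hcast p hp]; ring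
    rw [hsum2, ← hc]
    have hk : 2 * k = (d : ℤ) * m := by
      rw [hm, hd2h]
      push_cast
      ring
    rw [hk, hbez]
    ring
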